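/- Let μ > 0, δ > 0, σ > 0. Let ψ be a solution of the AL lattice on [0,T_f] and U a solution of the G-AL lattice on [0,T_f], and set y(t) = ψ(t) − U(t). Then for every t ∈ [0,T_f], ‖y(t)‖_{ℓ²} ≤ ‖y(0)‖_{ℓ²} + 2 ∫₀ᵗ ( μ ‖ψ(s)‖³_{ℓ²} + δ ‖U(s)‖^{2σ+1}_{ℓ²} ) ds. -/

import Mathlib

noncomputable section

open Set
open scoped ENNReal

/-- The sequence space ℓ²(ℤ,ℂ). -/
abbrev Seq2 := lp (fun _ : ℤ => ℂ) 2


/-- `ψ` is a solution of the Ablowitz–Ladik (AL) lattice (κ = ν = 1) on `[0,Tf]`: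
a continuously differentiable curve into ℓ²(ℤ,ℂ) satisfying
`i dψ_n/dt = (ψ_{n+1} − 2ψ_n + ψ_{n−1}) + μ|ψ_n|²(ψ_{n+1} + ψ_{n−1})` componentwise. -/
def IsALSolution (μ Tf : ℝ) (ψ : ℝ → Seq2) : Prop :=
  ∃ ψdot : ℝ → Seq2, ContinuousOn ψdot (Icc 0 Tf) ∧
    ∀ t ∈ Icc (0:ℝ) Tf,
      HasDerivWithinAt ψ (ψdot t) (Icc 0 Tf) t ∧
      ∀ n : ℤ, Complex.I * ψdot t n =
        (ψ t (n+1) - 2 * ψ t n + ψ t (n-1))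
          + (μ : ℂ) * (‖ψ t n‖^2 : ℝ) * (ψ t (n+1) + ψ t (n-1))


/-- `U` is a solution of the generalised Ablowitz–Ladik (G-AL) lattice on `[0,Tf]`:
a continuously differentiable curve into ℓ²(ℤ,ℂ) satisfying
`i dU_n/dt = (U_{n+1} − 2U_n + U_{n−1}) + δ|U_n|^{2σ}(U_{n+1} + U_{n−1})` componentwise. -/
def IsGALSolution (δ σ Tf : ℝ) (U : ℝ → Seq2) : Prop :=
  ∃ Udot : ℝ → Seq2, ContinuousOn Udot (Icc 0 Tf) ∧
    ∀ t ∈ Icc (0:ℝ) Tf,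
      HasDerivWithinAt U (Udot t) (Icc 0 Tf) t ∧
      ∀ n : ℤ, Complex.I * Udot t n =
        (U t (n+1) - 2 * U t n + U t (n-1))
          + (δ : ℂ) * (‖U t n‖ ^ (2*σ) : ℝ) * (U t (n+1) + U t (n-1))

lemma seq2_summable_sq (f : Seq2) : Summable (fun n : ℤ => ‖f n‖ ^ 2) := by
  have h := (lp.memℓp f).summable (p := 2) (by norm_num)
  have : (fun n : ℤ => ‖f n‖ ^ ((2:ℝ≥0∞).toReal)) = fun n : ℤ => ‖f n‖ ^ 2 := by
    funext n
    rw [ENNReal.toReal_ofNat, Real.rpow_two]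
  rwa [this] at h

lemma seq2_norm_sq (f : Seq2) : ‖f‖ ^ 2 = ∑' n : ℤ, ‖f n‖ ^ 2 := by
  have h := lp.norm_rpow_eq_tsum (p := 2) (by norm_num) f
  simpa [ENNReal.toReal_ofNat, Real.rpow_two] using h

lemma seq2_summable_sq_shift (f : Seq2) (k : ℤ) :
    Summable (fun n : ℤ => ‖f (n + k)‖ ^ 2) :=
  ((Equiv.addRight k).summable_iff (f := fun n : ℤ => ‖f n‖ ^ 2)).2 (seq2_summable_sq f)

lemma seq2_tsum_sq_shift (f : Seq2) (k : ℤ) :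
    ∑' n : ℤ, ‖f (n + k)‖ ^ 2 = ‖f‖ ^ 2 := by
  rw [seq2_norm_sq]
  exact (Equiv.addRight k).tsum_eq (fun n : ℤ => ‖f n‖ ^ 2)

lemma sq_le_aux (c : ℤ → ℂ) (f : Seq2) (k : ℤ) {C : ℝ} (hc : ∀ n, ‖c n‖ ≤ C) (n : ℤ) :
    ‖c n * f (n + k)‖ ^ 2 ≤ C ^ 2 * ‖f (n + k)‖ ^ 2 := by
  have h1 : ‖c n * f (n+k)‖ ≤ C * ‖f (n+k)‖ := by
    rw [norm_mul]; exact mul_le_mul_of_nonneg_right (hc n) (norm_nonneg _)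
  calc ‖c n * f (n+k)‖ ^ 2 ≤ (C * ‖f (n+k)‖) ^ 2 := pow_le_pow_left₀ (norm_nonneg _) h1 _
    _ = C ^ 2 * ‖f (n+k)‖ ^ 2 := by ring

lemma summable_sq_mulShift (c : ℤ → ℂ) (f : Seq2) (k : ℤ) {C : ℝ} (hc : ∀ n, ‖c n‖ ≤ C) :
    Summable (fun n : ℤ => ‖c n * f (n + k)‖ ^ 2) :=
  Summable.of_nonneg_of_le (fun n => by positivity) (sq_le_aux c f k hc)
    ((seq2_summable_sq_shift f k).mul_left _)

/-- Membership in ℓ² for a bounded multiplier times a shift. -/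
lemma memℓp_mulShift (c : ℤ → ℂ) (f : Seq2) (k : ℤ) {C : ℝ} (hc : ∀ n, ‖c n‖ ≤ C) :
    Memℓp (fun n : ℤ => c n * f (n + k)) 2 := by
  have hs := summable_sq_mulShift c f k hc
  have h2 : (fun n : ℤ => ‖c n * f (n + k)‖ ^ ((2:ℝ≥0∞).toReal))
      = fun n : ℤ => ‖c n * f (n + k)‖ ^ 2 := by
    funext n; rw [ENNReal.toReal_ofNat, Real.rpow_two]
  exact memℓp_gen (h2 ▸ hs)

/-- The bundled ℓ² element with entries `c n * f (n+k)`. -/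
def mulShift (c : ℤ → ℂ) (f : Seq2) (k : ℤ) {C : ℝ} (hc : ∀ n, ‖c n‖ ≤ C) : Seq2 :=
  ⟨fun n : ℤ => c n * f (n + k), memℓp_mulShift c f k hc⟩

@[simp] lemma mulShift_apply (c : ℤ → ℂ) (f : Seq2) (k : ℤ) {C : ℝ} (hc : ∀ n, ‖c n‖ ≤ C)
    (n : ℤ) : (mulShift c f k hc) n = c n * f (n + k) := rfl

lemma norm_mulShift_le (c : ℤ → ℂ) (f : Seq2) (k : ℤ) {C : ℝ} (hC : 0 ≤ C)
    (hc : ∀ n, ‖c n‖ ≤ C) : ‖mulShift c f k hc‖ ≤ C * ‖f‖ := by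
  apply lp.norm_le_of_tsum_le (by norm_num) (by positivity)
  have h2 : (fun n : ℤ => ‖(mulShift c f k hc) n‖ ^ ((2:ℝ≥0∞).toReal))
      = fun n : ℤ => ‖c n * f (n + k)‖ ^ 2 := by
    funext n; rw [ENNReal.toReal_ofNat, Real.rpow_two]; rfl
  rw [h2, ENNReal.toReal_ofNat, Real.rpow_two]
  calc ∑' n : ℤ, ‖c n * f (n + k)‖ ^ 2
      ≤ ∑' n : ℤ, C ^ 2 * ‖f (n + k)‖ ^ 2 :=
        Summable.tsum_le_tsum (sq_le_aux c f k hc) (summable_sq_mulShift c f k hc)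
          ((seq2_summable_sq_shift f k).mul_left _)
    _ = C ^ 2 * ∑' n : ℤ, ‖f (n + k)‖ ^ 2 := tsum_mul_left
    _ = (C * ‖f‖) ^ 2 := by rw [seq2_tsum_sq_shift]; ring

local notation "⟪" x ", " y "⟫" => @inner ℂ _ _ x y

/-- The shift of an ℓ² sequence. -/
def shiftE (f : Seq2) (k : ℤ) : Seq2 :=
  mulShift (fun _ => (1:ℂ)) f k (C := 1) (fun _ => by norm_num)

@[simp] lemma shiftE_apply (f : Seq2) (k n : ℤ) : (shiftE f k) n = f (n + k) := by
  simp [shiftE]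

lemma norm_shiftE_le (f : Seq2) (k : ℤ) : ‖shiftE f k‖ ≤ ‖f‖ := by
  simpa [shiftE] using norm_mulShift_le (fun _ => (1:ℂ)) f k zero_le_one (fun _ => by norm_num)

lemma inner_seq2 (f g : Seq2) : ⟪f, g⟫ = ∑' n : ℤ, (starRingEnd ℂ) (f n) * g n := by
  rw [lp.inner_eq_tsum]; exact tsum_congr fun n => by rw [RCLike.inner_apply]; ring

lemma inner_shift_conj (y : Seq2) :
    ⟪y, shiftE y (-1)⟫ = (starRingEnd ℂ) ⟪y, shiftE y 1⟫ := by
  rw [inner_seq2, inner_seq2]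
  have h1 : (starRingEnd ℂ) (∑' n : ℤ, (starRingEnd ℂ) (y n) * (shiftE y 1) n)
      = ∑' n : ℤ, (starRingEnd ℂ) ((starRingEnd ℂ) (y n) * (shiftE y 1) n) := by
    exact tsum_star
  rw [h1]
  rw [← (Equiv.addRight (1:ℤ)).tsum_eq
    (fun n : ℤ => (starRingEnd ℂ) (y n) * (shiftE y (-1)) n)]
  apply tsum_congr
  intro n
  simp only [Equiv.coe_addRight, shiftE_apply, map_mul, RingHomCompTriple.comp_apply,
    RingHom.id_apply]
  have : n + 1 + -1 = n := by ring
  rw [this]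
  ring

lemma invert_I {z R : ℂ} (h : Complex.I * z = R) : z = -Complex.I * R := by
  rw [← h, ← mul_assoc]
  simp

set_option maxHeartbeats 1000000 in
lemma key_estimate (μ δ σ : ℝ) (hμ : 0 < μ) (hδ : 0 < δ) (hσ : 0 < σ)
    (a b wa wb : Seq2)
    (ha : ∀ n : ℤ, Complex.I * wa n =
        (a (n+1) - 2 * a n + a (n-1))
          + (μ : ℂ) * (‖a n‖^2 : ℝ) * (a (n+1) + a (n-1)))
    (hb : ∀ n : ℤ, Complex.I * wb n =
        (b (n+1) - 2 * b n + b (n-1))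
          + (δ : ℂ) * (‖b n‖ ^ (2*σ) : ℝ) * (b (n+1) + b (n-1))) :
    (⟪a - b, wa - wb⟫).re ≤ ‖a - b‖ * (2 * (μ * ‖a‖^3 + δ * ‖b‖ ^ (2*σ+1))) := by
  set y : Seq2 := a - b with hy
  set ca : ℤ → ℂ := fun n => (μ : ℂ) * (‖a n‖^2 : ℝ) with hca_def
  set cb : ℤ → ℂ := fun n => (δ : ℂ) * (‖b n‖ ^ (2*σ) : ℝ) with hcb_def
  have hca : ∀ n, ‖ca n‖ ≤ μ * ‖a‖^2 := by
    intro n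
    have h1 : ‖a n‖ = ‖a n‖ := rfl
    have h2 : ‖a n‖ ≤ ‖a‖ := lp.norm_apply_le_norm two_ne_zero a n
    simp only [hca_def, norm_mul, Complex.norm_real, Real.norm_eq_abs]
    rw [abs_of_nonneg hμ.le, abs_of_nonneg (by positivity)]
    rw [h1]
    exact mul_le_mul_of_nonneg_left (pow_le_pow_left₀ (norm_nonneg _) h2 2) hμ.le
  have hcb : ∀ n, ‖cb n‖ ≤ δ * ‖b‖ ^ (2*σ) := by
    intro n
    have h1 : ‖b n‖ = ‖b n‖ := rfl
    have h2 : ‖b n‖ ≤ ‖b‖ := lp.norm_apply_le_norm two_ne_zero b n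
    simp only [hcb_def, norm_mul, Complex.norm_real, Real.norm_eq_abs]
    rw [abs_of_nonneg hδ.le, abs_of_nonneg (by positivity)]
    rw [h1]
    exact mul_le_mul_of_nonneg_left
      (Real.rpow_le_rpow (norm_nonneg _) h2 (by positivity)) hδ.le
  set P1 : Seq2 := mulShift ca a 1 hca with hP1
  set P2 : Seq2 := mulShift ca a (-1) hca with hP2
  set Q1 : Seq2 := mulShift cb b 1 hcb with hQ1
  set Q2 : Seq2 := mulShift cb b (-1) hcb with hQ2
  have hw : wa - wb = (-Complex.I) •
      (shiftE y 1 + shiftE y (-1) - (2:ℂ) • y + P1 + P2 - Q1 - Q2) := by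
    apply lp.ext
    funext n
    have hya : ∀ m : ℤ, y m = a m - b m := by
      intro m; rw [hy]; simp [lp.coeFn_sub]
    have h1 : Complex.I * (wa n - wb n) =
        (y (n+1) + y (n + -1) - 2 * y n + ca n * a (n+1) + ca n * a (n + -1)
          - cb n * b (n+1) - cb n * b (n + -1)) := by
      have e1 := ha n
      have e2 := hb n
      rw [hya, hya, hya]
      have hn1 : n + -1 = n - 1 := by ring
      rw [hn1]
      rw [hca_def, hcb_def]
      push_cast at e1 e2 ⊢
      linear_combination e1 - e2
    have h2 := invert_I h1
    have hsub : (wa - wb : Seq2) n = wa n - wb n := by simp [lp.coeFn_sub]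
    calc (wa - wb : Seq2) n = wa n - wb n := hsub
      _ = -Complex.I * (y (n+1) + y (n + -1) - 2 * y n + ca n * a (n+1) + ca n * a (n + -1)
          - cb n * b (n+1) - cb n * b (n + -1)) := h2
      _ = ((-Complex.I) • (shiftE y 1 + shiftE y (-1) - (2:ℂ) • y + P1 + P2 - Q1 - Q2) : Seq2) n := by
          simp only [lp.coeFn_smul, Pi.smul_apply, lp.coeFn_add, Pi.add_apply, lp.coeFn_sub,
            Pi.sub_apply, shiftE_apply, mulShift_apply, hP1, hP2, hQ1, hQ2, smul_eq_mul]
          try ring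
  rw [hw]
  rw [inner_smul_right]
  set z1 := ⟪y, shiftE y 1⟫ with hz1
  set z2 := ⟪y, shiftE y (-1)⟫ with hz2
  set z0 := ⟪y, y⟫ with hz0
  set p1 := ⟪y, P1⟫
  set p2 := ⟪y, P2⟫
  set q1 := ⟪y, Q1⟫
  set q2 := ⟪y, Q2⟫
  have hexp : ⟪y, shiftE y 1 + shiftE y (-1) - (2:ℂ) • y + P1 + P2 - Q1 - Q2⟫
      = z1 + z2 - 2 * z0 + p1 + p2 - q1 - q2 := by
    rw [inner_sub_right, inner_sub_right, inner_add_right, inner_add_right, inner_sub_right,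
      inner_add_right, inner_smul_right]
  rw [hexp]
  have him12 : (z1 + z2).im = 0 := by
    rw [hz2, inner_shift_conj, hz1]
    rw [Complex.add_im, Complex.conj_im]
    ring
  have him0 : z0.im = 0 := by
    rw [hz0, inner_self_eq_norm_sq_to_K]
    simp [← Complex.ofReal_pow]
  have hre : (-Complex.I * (z1 + z2 - 2 * z0 + p1 + p2 - q1 - q2)).re
      = (z1 + z2).im - 2 * z0.im + p1.im + p2.im - q1.im - q2.im := by
    simp [Complex.mul_re, Complex.add_im, Complex.sub_im, Complex.mul_im]
    try ring
  rw [hre, him12, him0]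
  have hbp : ∀ (c : ℤ → ℂ) (f : Seq2) (k : ℤ) (C : ℝ) (hC : 0 ≤ C) (hc : ∀ n, ‖c n‖ ≤ C),
      |(⟪y, mulShift c f k hc⟫).im| ≤ C * (‖y‖ * ‖f‖) := by
    intro c f k C hC hc
    calc |(⟪y, mulShift c f k hc⟫).im| ≤ ‖⟪y, mulShift c f k hc⟫‖ :=
        Complex.abs_im_le_norm _
      _ = ‖(⟪y, mulShift c f k hc⟫ : ℂ)‖ := rfl
      _ ≤ ‖y‖ * ‖mulShift c f k hc‖ := norm_inner_le_norm _ _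
      _ ≤ ‖y‖ * (C * ‖f‖) :=
        mul_le_mul_of_nonneg_left (norm_mulShift_le c f k hC hc) (norm_nonneg _)
      _ = C * (‖y‖ * ‖f‖) := by ring
  have hCa : (0:ℝ) ≤ μ * ‖a‖^2 := by positivity
  have hCb : (0:ℝ) ≤ δ * ‖b‖ ^ (2*σ) := by positivity
  have e1 := (abs_le.1 (hbp ca a 1 _ hCa hca)).2
  have e2 := (abs_le.1 (hbp ca a (-1) _ hCa hca)).2
  have e3 := (abs_le.1 (hbp cb b 1 _ hCb hcb)).1
  have e4 := (abs_le.1 (hbp cb b (-1) _ hCb hcb)).1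
  have hb3 : δ * ‖b‖ ^ (2*σ) * (‖y‖ * ‖b‖) = ‖y‖ * (δ * ‖b‖ ^ (2*σ+1)) := by
    rw [Real.rpow_add' (norm_nonneg b) (by positivity), Real.rpow_one]
    ring
  have ha3 : μ * ‖a‖^2 * (‖y‖ * ‖a‖) = ‖y‖ * (μ * ‖a‖^3) := by ring
  nlinarith [e1, e2, e3, e4]


set_option maxHeartbeats 1000000 in
theorem al_gal_distance_integral_inequality' (μ δ σ Tf : ℝ)
    (hμ : 0 < μ) (hδ : 0 < δ) (hσ : 0 < σ)
    (ψ U : ℝ → Seq2)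
    (hψ : ∃ ψdot : ℝ → Seq2, ContinuousOn ψdot (Icc 0 Tf) ∧
      ∀ t ∈ Icc (0:ℝ) Tf,
        HasDerivWithinAt ψ (ψdot t) (Icc 0 Tf) t ∧
        ∀ n : ℤ, Complex.I * ψdot t n =
          (ψ t (n+1) - 2 * ψ t n + ψ t (n-1))
            + (μ : ℂ) * (‖ψ t n‖^2 : ℝ) * (ψ t (n+1) + ψ t (n-1)))
    (hU : ∃ Udot : ℝ → Seq2, ContinuousOn Udot (Icc 0 Tf) ∧
      ∀ t ∈ Icc (0:ℝ) Tf,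
        HasDerivWithinAt U (Udot t) (Icc 0 Tf) t ∧
        ∀ n : ℤ, Complex.I * Udot t n =
          (U t (n+1) - 2 * U t n + U t (n-1))
            + (δ : ℂ) * (‖U t n‖ ^ (2*σ) : ℝ) * (U t (n+1) + U t (n-1))) :
    ∀ t ∈ Icc (0:ℝ) Tf,
      ‖ψ t - U t‖ ≤ ‖ψ 0 - U 0‖
        + 2 * ∫ s in (0:ℝ)..t, (μ * ‖ψ s‖^3 + δ * ‖U s‖ ^ (2*σ+1)) := by
  obtain ⟨ψd, hψdc, hψall⟩ := hψ
  obtain ⟨Ud, hUdc, hUall⟩ := hU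
  intro t ht
  have hTf : (0:ℝ) ≤ Tf := le_trans ht.1 ht.2
  have h0mem : (0:ℝ) ∈ Icc (0:ℝ) Tf := ⟨le_refl 0, hTf⟩
  have hψcont : ContinuousOn ψ (Icc 0 Tf) := fun x hx => ((hψall x hx).1).continuousWithinAt
  have hUcont : ContinuousOn U (Icc 0 Tf) := fun x hx => ((hUall x hx).1).continuousWithinAt
  set g₁ : ℝ → ℝ := fun s => μ * ‖ψ s‖^3 + δ * ‖U s‖ ^ (2*σ+1) with hg₁def
  have hg₁cont : ContinuousOn g₁ (Icc 0 Tf) := by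
    apply ContinuousOn.add
    · exact continuousOn_const.mul ((hψcont.norm).pow 3)
    · exact continuousOn_const.mul
        ((hUcont.norm).rpow_const (fun x hx => Or.inr (by positivity)))
  have hg₁nonneg : ∀ s, 0 ≤ g₁ s := by
    intro s
    have h1 : (0:ℝ) ≤ ‖U s‖ ^ (2*σ+1) := Real.rpow_nonneg (norm_nonneg _) _
    have h2 : (0:ℝ) ≤ ‖ψ s‖ ^ 3 := by positivity
    simp only [hg₁def]
    nlinarith
  set F : ℝ → ℝ := fun s => ∫ x in (0:ℝ)..s, g₁ x with hFdef
  have hFd : ∀ x ∈ Icc (0:ℝ) Tf, HasDerivWithinAt F (g₁ x) (Icc 0 Tf) x := by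
    intro x hx
    haveI : Fact (x ∈ Icc (0:ℝ) Tf) := ⟨hx⟩
    apply intervalIntegral.integral_hasDerivWithinAt_right (t := Icc (0:ℝ) Tf)
    · apply ContinuousOn.intervalIntegrable
      apply hg₁cont.mono
      rw [uIcc_of_le hx.1]
      exact Icc_subset_Icc le_rfl hx.2
    · exact hg₁cont.stronglyMeasurableAtFilter_nhdsWithin measurableSet_Icc x
    · exact hg₁cont x hx
  set φ : ℝ → ℝ := fun s => ‖ψ s - U s‖^2 with hφdef
  have hφnonneg : ∀ s, 0 ≤ φ s := fun s => sq_nonneg _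
  have hφd : ∀ x ∈ Icc (0:ℝ) Tf, HasDerivWithinAt φ
      (2 * (⟪ψ x - U x, ψd x - Ud x⟫).re) (Icc 0 Tf) x := by
    intro x hx
    have hy : HasDerivWithinAt (fun s => ψ s - U s) (ψd x - Ud x) (Icc 0 Tf) x :=
      ((hψall x hx).1).sub ((hUall x hx).1)
    have hi := hy.inner ℂ hy
    have hr := Complex.reCLM.hasFDerivAt.comp_hasDerivWithinAt x hi
    have hval : Complex.reCLM (⟪ψ x - U x, ψd x - Ud x⟫ + ⟪ψd x - Ud x, ψ x - U x⟫)
        = 2 * (⟪ψ x - U x, ψd x - Ud x⟫).re := by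
      have hsymm : (⟪ψd x - Ud x, ψ x - U x⟫ : ℂ)
          = (starRingEnd ℂ) ⟪ψ x - U x, ψd x - Ud x⟫ := (inner_conj_symm _ _).symm
      rw [Complex.reCLM_apply, Complex.add_re, hsymm, Complex.conj_re]
      ring
    rw [hval] at hr
    apply hr.congr
    · intro s _
      show φ s = Complex.reCLM ⟪ψ s - U s, ψ s - U s⟫
      rw [Complex.reCLM_apply, ← RCLike.re_to_complex, inner_self_eq_norm_sq]
    · show φ x = Complex.reCLM ⟪ψ x - U x, ψ x - U x⟫
      rw [Complex.reCLM_apply, ← RCLike.re_to_complex, inner_self_eq_norm_sq]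
  have key : ∀ ε : ℝ, 0 < ε → ‖ψ t - U t‖ ≤ ‖ψ 0 - U 0‖ + Real.sqrt ε + 2 * F t := by
    intro ε hε
    set h : ℝ → ℝ := fun s => Real.sqrt (φ s + ε) - 2 * F s with hhdef
    have hφc : ContinuousOn φ (Icc 0 Tf) := fun x hx => (hφd x hx).continuousWithinAt
    have hFc : ContinuousOn F (Icc 0 Tf) := fun x hx => (hFd x hx).continuousWithinAt
    have hcont : ContinuousOn h (Icc 0 Tf) := by
      apply ContinuousOn.sub
      · exact Real.continuous_sqrt.comp_continuousOn (hφc.add continuousOn_const)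
      · exact continuousOn_const.mul hFc
    have hmono : AntitoneOn h (Icc 0 Tf) := by
      apply antitoneOn_of_hasDerivWithinAt_nonpos (convex_Icc 0 Tf) hcont
        (f' := fun x => (2 * (⟪ψ x - U x, ψd x - Ud x⟫).re) / (2 * Real.sqrt (φ x + ε))
          - 2 * g₁ x)
      · intro x hx
        rw [interior_Icc] at hx
        have hxI : x ∈ Icc (0:ℝ) Tf := Ioo_subset_Icc_self hx
        have h1 : HasDerivWithinAt (fun s => φ s + ε)
            (2 * (⟪ψ x - U x, ψd x - Ud x⟫).re) (Icc 0 Tf) x := (hφd x hxI).add_const ε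
        have hne : φ x + ε ≠ 0 := by
          have := hφnonneg x; positivity
        have h2 := h1.sqrt hne
        have h3 := h2.sub ((hFd x hxI).const_mul 2)
        rw [interior_Icc]
        exact h3.mono Ioo_subset_Icc_self
      · intro x hx
        rw [interior_Icc] at hx
        have hxI : x ∈ Icc (0:ℝ) Tf := Ioo_subset_Icc_self hx
        have hkey := key_estimate μ δ σ hμ hδ hσ (ψ x) (U x) (ψd x) (Ud x)
          (hψall x hxI).2 (hUall x hxI).2
        have hg₁x : μ * ‖ψ x‖^3 + δ * ‖U x‖ ^ (2*σ+1) = g₁ x := rfl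
        rw [hg₁x] at hkey
        have hsp : 0 < Real.sqrt (φ x + ε) := Real.sqrt_pos.2 (by
          have := hφnonneg x; linarith)
        have hyle : ‖ψ x - U x‖ ≤ Real.sqrt (φ x + ε) := by
          have h1 : φ x = ‖ψ x - U x‖^2 := rfl
          have h2 : ‖ψ x - U x‖^2 ≤ φ x + ε := by rw [h1]; linarith
          have := Real.sqrt_le_sqrt h2
          rwa [Real.sqrt_sq (norm_nonneg _)] at this
        have hgx : 0 ≤ g₁ x := hg₁nonneg x
        rw [sub_nonpos, div_le_iff₀ (by positivity)]
        nlinarith [norm_nonneg (ψ x - U x)]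
    have h0t : h t ≤ h 0 := hmono h0mem ht ht.1
    have hF0 : F 0 = 0 := intervalIntegral.integral_same
    have l1 : ‖ψ t - U t‖ ≤ Real.sqrt (φ t + ε) := by
      have h1 : φ t = ‖ψ t - U t‖^2 := rfl
      have h2 : ‖ψ t - U t‖^2 ≤ φ t + ε := by rw [h1]; linarith
      have := Real.sqrt_le_sqrt h2
      rwa [Real.sqrt_sq (norm_nonneg _)] at this
    have l2 : Real.sqrt (φ 0 + ε) ≤ ‖ψ 0 - U 0‖ + Real.sqrt ε := by
      have h1 : φ 0 = ‖ψ 0 - U 0‖^2 := rfl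
      have h2 : φ 0 + ε ≤ (‖ψ 0 - U 0‖ + Real.sqrt ε)^2 := by
        nlinarith [Real.sq_sqrt hε.le, Real.sqrt_nonneg ε, norm_nonneg (ψ 0 - U 0)]
      have h3 := Real.sqrt_le_sqrt h2
      rwa [Real.sqrt_sq (by positivity)] at h3
    have hht : h t = Real.sqrt (φ t + ε) - 2 * F t := rfl
    have hh0 : h 0 = Real.sqrt (φ 0 + ε) - 2 * F 0 := rfl
    rw [hht, hh0, hF0] at h0t
    linarith
  have hFt : (∫ s in (0:ℝ)..t, (μ * ‖ψ s‖^3 + δ * ‖U s‖ ^ (2*σ+1))) = F t := rfl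
  rw [hFt]
  by_contra hcon
  push_neg at hcon
  set c : ℝ := ‖ψ t - U t‖ - (‖ψ 0 - U 0‖ + 2 * F t) with hcdef
  have hc : 0 < c := by simp only [hcdef]; linarith
  have hkey := key ((c/2)^2) (by positivity)
  rw [Real.sqrt_sq (by positivity : (0:ℝ) ≤ c/2)] at hkey
  simp only [hcdef] at hkey
  linarith

/-- Integral inequality for the distance of an AL solution ψ and a G-AL solution U:
`‖y(t)‖ ≤ ‖y(0)‖ + 2∫₀ᵗ (μ‖ψ(s)‖³ + δ‖U(s)‖^{2σ+1}) ds` with `y = ψ − U`. -/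
theorem al_gal_distance_integral_inequality (μ δ σ Tf : ℝ)
    (hμ : 0 < μ) (hδ : 0 < δ) (hσ : 0 < σ)
    (ψ U : ℝ → Seq2) (hψ : IsALSolution μ Tf ψ) (hU : IsGALSolution δ σ Tf U) :
    ∀ t ∈ Icc (0:ℝ) Tf,
      ‖ψ t - U t‖ ≤ ‖ψ 0 - U 0‖
        + 2 * ∫ s in (0:ℝ)..t, (μ * ‖ψ s‖^3 + δ * ‖U s‖ ^ (2*σ+1)) := by
  exact al_gal_distance_integral_inequality' μ δ σ Tf hμ hδ hσ ψ U hψ hU
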